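/- Let M be an L_a-structure, v ∈ M a certified element, and k ∈ ℕ such that M ⊨ m̄ ≠ v for all m < k. Then for every m ≤ k, M satisfies ∀y (y ≤ m̄ ↔ ⋁_{l ≤ m} y = l̄). -/
import Mathlib


open FirstOrder FirstOrder.Language

/-- Function symbols of the arithmetic language `L_a = {0, S, +, ×, ≤}`. -/
inductive AFunc : ℕ → Type
  | zero : AFunc 0
  | succ : AFunc 1
  | add : AFunc 2
  | mul : AFunc 2

/-- Relation symbols of `L_a`: the single binary relation `≤`. -/
inductive ARel : ℕ → Type
  | le : ARel 2

/-- The first-order language of arithmetic `L_a = {0, S, +, ×, ≤}`. -/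
def La : Language := ⟨AFunc, ARel⟩

/-- The standard model ℕ as an `La`-structure. -/
instance : La.Structure ℕ where
  funMap := fun {n} f => match f with
    | .zero => fun _ => 0
    | .succ => fun v => v 0 + 1
    | .add => fun v => v 0 + v 1
    | .mul => fun v => v 0 * v 1
  RelMap := fun {n} r => match r with
    | .le => fun v => v 0 ≤ v 1

/-- The term `0`. -/
def zeroT {β : Type} : La.Term β := Term.func AFunc.zero ![]
/-- The term `S t`. -/
def succT {β : Type} (t : La.Term β) : La.Term β := Term.func AFunc.succ ![t]
/-- The term `t + u`. -/
def addT {β : Type} (t u : La.Term β) : La.Term β := Term.func AFunc.add ![t, u]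
/-- The term `t × u`. -/
def mulT {β : Type} (t u : La.Term β) : La.Term β := Term.func AFunc.mul ![t, u]

/-- The numeral `S…S0`. -/
def num {β : Type} : ℕ → La.Term β
  | 0 => zeroT
  | n + 1 => succT (num n)

/-- The atomic formula `t ≤ u`. -/
def leF {α : Type} {n : ℕ} (t u : La.Term (α ⊕ Fin n)) : La.BoundedFormula α n :=
  Relations.boundedFormula ARel.le ![t, u]

/-- The formula `t < u`, i.e. `t ≤ u ∧ t ≠ u`. -/
def ltF {α : Type} {n : ℕ} (t u : La.Term (α ⊕ Fin n)) : La.BoundedFormula α n :=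
  leF t u ⊓ ∼(t =' u)

/-- Lift a term of context `n` to context `n+1`. -/
def liftT {α : Type} {n : ℕ} (t : La.Term (α ⊕ Fin n)) : La.Term (α ⊕ Fin (n + 1)) :=
  t.relabel (Sum.map id Fin.castSucc)

/-- The de Bruijn variable `i` as a term. -/
def vr {α : Type} {n : ℕ} (i : Fin n) : La.Term (α ⊕ Fin n) := Term.var (Sum.inr i)

section Semantics
open FirstOrder.Language.Structure

variable (M : Type) [La.Structure M]

/-- The interpretation of `0` in `M`. -/
def zM : M := funMap (L := La) AFunc.zero ![]
/-- The interpretation of successor in `M`. -/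
def sM (x : M) : M := funMap (L := La) AFunc.succ ![x]
/-- The interpretation of addition in `M`. -/
def addM (x y : M) : M := funMap (L := La) AFunc.add ![x, y]
/-- The interpretation of multiplication in `M`. -/
def mulM (x y : M) : M := funMap (L := La) AFunc.mul ![x, y]
/-- The interpretation of `≤` in `M`. -/
def leM (x y : M) : Prop := RelMap (L := La) ARel.le ![x, y]
/-- `x < y` in `M`: `x ≤ y ∧ x ≠ y`. -/
def ltM (x y : M) : Prop := leM M x y ∧ x ≠ y
/-- The interpretation of the numeral `m̄` in `M`. -/
def natM : ℕ → M
  | 0 => zM M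
  | m + 1 => sM M (natM m)

/-- An element `v` of an `L_a`-structure is *certified* if it satisfies the
certification axioms A1–A10. -/
structure Certified (v : M) : Prop where
  a1 : leM M (zM M) v
  a2 : ∀ x : M, ltM M x v → leM M (sM M x) v
  a3 : ∀ x : M, leM M x (zM M) ↔ x = zM M
  a4 : ∀ x : M, ltM M x v → ∀ y : M, leM M y (sM M x) ↔ (leM M y x ∨ y = sM M x)
  a5 : ∀ x y z : M, leM M x v → leM M y v → leM M z v →
    sM M (addM M (mulM M x y) z) ≠ zM M
  a6 : ∀ x y z w : M, leM M x v → leM M y v → leM M z v → leM M w v →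
    sM M (addM M (mulM M x y) z) = sM M w → addM M (mulM M x y) z = w
  a7 : ∀ x y : M, leM M x v → leM M y v → addM M (mulM M x y) (zM M) = mulM M x y
  a8 : ∀ x y z : M, leM M x v → leM M y v → leM M z v →
    addM M (mulM M x y) (sM M z) = sM M (addM M (mulM M x y) z)
  a9 : ∀ x : M, leM M x v → mulM M x (zM M) = zM M
  a10 : ∀ x y : M, leM M x v → leM M y v → mulM M x (sM M y) = addM M (mulM M x y) x

end Semantics

/-- if `v` is certified and `m̄ ≠ v` in `M` for all `m < k`,
then for every `m ≤ k`, `M ⊨ ∀y (y ≤ m̄ ↔ ⋁_{l ≤ m} y = l̄)`. -/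
theorem statement4 (M : Type) [La.Structure M] (v : M) (hv : Certified M v)
    (k : ℕ) (hk : ∀ m : ℕ, m < k → natM M m ≠ v) :
    ∀ m : ℕ, m ≤ k → ∀ y : M, leM M y (natM M m) ↔ ∃ l : ℕ, l ≤ m ∧ y = natM M l := by
  -- first, the previous lemma: m̄ ≤ v for all m ≤ k
  have hle : ∀ m : ℕ, m ≤ k → leM M (natM M m) v := by
    intro m
    induction m with
    | zero => intro _; exact hv.a1
    | succ n ih =>
      intro h
      have hn : n < k := Nat.lt_of_succ_le h
      exact hv.a2 _ ⟨ih (Nat.le_of_lt hn), hk n hn⟩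
  intro m
  induction m with
  | zero =>
    intro _ y
    constructor
    · intro h; exact ⟨0, le_refl 0, (hv.a3 y).mp h⟩
    · rintro ⟨l, hl, rfl⟩
      interval_cases l
      exact (hv.a3 _).mpr rfl
  | succ n ih =>
    intro h y
    have hn : n < k := Nat.lt_of_succ_le h
    have hlt : ltM M (natM M n) v := ⟨hle n (Nat.le_of_lt hn), hk n hn⟩
    have h4 := hv.a4 (natM M n) hlt y
    constructor
    · intro hy
      rcases (h4.mp hy) with hy' | hy'
      · obtain ⟨l, hl, rfl⟩ := (ih (Nat.le_of_lt hn) y).mp hy'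
        exact ⟨l, Nat.le_succ_of_le hl, rfl⟩
      · exact ⟨n + 1, le_refl _, hy'⟩
    · rintro ⟨l, hl, rfl⟩
      rcases Nat.lt_or_ge l (n + 1) with hl' | hl'
      · exact h4.mpr (Or.inl ((ih (Nat.le_of_lt hn) _).mpr
          ⟨l, Nat.lt_succ_iff.mp hl', rfl⟩))
      · have : l = n + 1 := le_antisymm hl hl'
        subst this
        exact h4.mpr (Or.inr rfl)
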